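/- Fix η > 0. The function u ↦ β(u,η), where β(u,η) is the unique positive solution of e^{−uβ} = 1 − (u−η)β, is strictly decreasing in u (for u > η). For fixed u, β(u,η) is strictly increasing in η, and β(u,η) → 0 as η → 0+. -/

import Mathlib

/-- Strict convexity: below the root `B`, the function `e^{-ux} - 1 + (u-η)x` is negative. -/
lemma key_aux (u η B x : ℝ) (hu : 0 < u) (hB : 0 < B)
    (heq : Real.exp (-(u * B)) = 1 - (u - η) * B) (hx : 0 < x) (hxB : x < B) :
    Real.exp (-(u * x)) < 1 - (u - η) * x := by
  have ht0 : 0 < x / B := div_pos hx hB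
  have ht1 : x / B < 1 := (div_lt_one hB).2 hxB
  have hne : (0 : ℝ) ≠ -(u * B) := by nlinarith [mul_pos hu hB]
  have h := strictConvexOn_exp.2 (Set.mem_univ (0:ℝ)) (Set.mem_univ (-(u * B))) hne
      (by linarith : (0:ℝ) < 1 - x / B) ht0 (by ring)
  simp only [smul_eq_mul, mul_zero, zero_add, Real.exp_zero, mul_one] at h
  rw [heq] at h
  have h1 : x / B * -(u * B) = -(u * x) := by field_simp
  have h2 : (1 - x / B) + x / B * (1 - (u - η) * B) = 1 - (u - η) * x := by
    field_simp; ring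
  rw [h1, h2] at h
  exact h

theorem stmt_10 (β : ℝ → ℝ → ℝ)
    (hβ : ∀ u η : ℝ, 0 < η → η < u →
      0 < β u η ∧ Real.exp (-(u * β u η)) = 1 - (u - η) * β u η) :
    (∀ η : ℝ, 0 < η → StrictAntiOn (fun u => β u η) (Set.Ioi η)) ∧
    (∀ u : ℝ, 0 < u → StrictMonoOn (fun η => β u η) (Set.Ioo 0 u)) ∧
    (∀ u : ℝ, 0 < u →
      Filter.Tendsto (fun η => β u η) (nhdsWithin 0 (Set.Ioi 0)) (nhds 0)) := by
  refine ⟨?_, ?_, ?_⟩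
  · -- strictly decreasing in u
    intro η hη u₁ hu₁ u₂ hu₂ h12
    simp only [Set.mem_Ioi] at hu₁ hu₂
    obtain ⟨hB1pos, hB1⟩ := hβ u₁ η hη hu₁
    obtain ⟨hB2pos, hB2⟩ := hβ u₂ η hη hu₂
    set B₁ := β u₁ η with hB₁def
    set B₂ := β u₂ η with hB₂def
    -- φ_{u₂}(B₁) > 0 : exp(-(u₂ B₁)) > 1 - (u₂-η)B₁
    have hu1pos : 0 < u₁ := lt_trans hη hu₁
    have hu2pos : 0 < u₂ := lt_trans hη hu₂
    have ha : 0 < u₁ * B₁ := mul_pos hu1pos hB1pos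
    have hab : u₁ * B₁ < u₂ * B₁ := by nlinarith
    -- exp(-(u₁B₁)) - exp(-(u₂B₁)) < u₂B₁ - u₁B₁
    have hexp1 : Real.exp (-(u₁ * B₁)) < 1 := Real.exp_lt_one_iff.2 (neg_lt_zero.2 ha)
    have hfac : Real.exp (-(u₂ * B₁)) = Real.exp (-(u₁ * B₁)) * Real.exp (u₁ * B₁ - u₂ * B₁) := by
      rw [← Real.exp_add]; ring_nf
    have hsmall : (u₁ * B₁ - u₂ * B₁) + 1 < Real.exp (u₁ * B₁ - u₂ * B₁) :=
      Real.add_one_lt_exp (ne_of_lt (by linarith))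
    have hgt : 1 - (u₂ - η) * B₁ < Real.exp (-(u₂ * B₁)) := by
      have hpos1 : 0 < Real.exp (-(u₁ * B₁)) := Real.exp_pos _
      nlinarith [hB1]
    -- conclude B₂ < B₁
    by_contra hcon
    push_neg at hcon
    rcases lt_or_eq_of_le hcon with hlt | heqB
    · have := key_aux u₂ η B₂ B₁ hu2pos hB2pos hB2 hB1pos hlt
      linarith
    · rw [show B₂ = B₁ from heqB.symm] at hB2; linarith
  · -- strictly increasing in η
    intro u hu η₁ hη₁ η₂ hη₂ h12
    obtain ⟨hη₁0, hη₁u⟩ := hη₁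
    obtain ⟨hη₂0, hη₂u⟩ := hη₂
    obtain ⟨hB1pos, hB1⟩ := hβ u η₁ hη₁0 hη₁u
    obtain ⟨hB2pos, hB2⟩ := hβ u η₂ hη₂0 hη₂u
    set B₁ := β u η₁ with hB₁def
    set B₂ := β u η₂ with hB₂def
    -- exp(-(u B₂)) = 1 - (u-η₂)B₂ > 1 - (u-η₁)B₂
    have hgt : 1 - (u - η₁) * B₂ < Real.exp (-(u * B₂)) := by nlinarith [hB2]
    by_contra hcon
    push_neg at hcon
    rcases lt_or_eq_of_le hcon with hlt | heqB
    · have := key_aux u η₁ B₁ B₂ hu hB1pos hB1 hB2pos hlt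
      linarith
    · rw [show B₂ = B₁ from heqB] at hB2; nlinarith
  · -- limit as η → 0⁺
    intro u hu
    rw [Metric.tendsto_nhdsWithin_nhds]
    intro ε hε
    have huε : 0 < u * ε := mul_pos hu hε
    have hc : 0 < Real.exp (-(u * ε)) - 1 + u * ε := by
      have := Real.add_one_lt_exp (ne_of_lt (neg_lt_zero.2 huε))
      have h2 := Real.exp_pos (-(u * ε))
      nlinarith [Real.add_one_lt_exp (ne_of_gt huε)]
    set c := Real.exp (-(u * ε)) - 1 + u * ε with hcdef
    refine ⟨min u (c / ε), lt_min hu (div_pos hc hε), ?_⟩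
    intro η hηmem hdist
    simp only [Set.mem_Ioi] at hηmem
    rw [Real.dist_eq, sub_zero, abs_of_pos hηmem] at hdist
    have hηu : η < u := lt_of_lt_of_le hdist (min_le_left _ _)
    have hηc : η < c / ε := lt_of_lt_of_le hdist (min_le_right _ _)
    obtain ⟨hBpos, hBeq⟩ := hβ u η hηmem hηu
    rw [Real.dist_eq, sub_zero, abs_of_pos hBpos]
    by_contra hcon
    push_neg at hcon
    have hηε : η * ε < c := (lt_div_iff₀ hε).1 hηc
    rcases lt_or_eq_of_le hcon with hlt | heqB
    · have := key_aux u η (β u η) ε hu hBpos hBeq hε hlt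
      nlinarith
    · rw [← heqB] at hBeq
      nlinarith
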